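/- Let X be a chain. For every orientation-preserving partial transformation α of X there exists an injective orientation-preserving partial transformation β of X such that αβα = α. In particular, the monoid POP(X) of all orientation-preserving partial transformations of X is regular. -/

import Mathlib

variable {X : Type*}

/-- The partial transformation `f` is order-preserving on the subset `A` of its domain. -/
def IsOrdOn [LinearOrder X] (f : X →. X) (A : Set X) : Prop :=
  ∀ ⦃x y u v : X⦄, x ∈ A → y ∈ A → x ≤ y → u ∈ f x → v ∈ f y → u ≤ v

/-- `Y` is an ideal of the partial transformation `f`: a nonempty subset of the domain such
that `f` is order-preserving on `Y` and on `Dom f \ Y`, and every element of `Y` is below every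
element of `Dom f \ Y` while its image is above. -/
def IsIdeal [LinearOrder X] (f : X →. X) (Y : Set X) : Prop :=
  Y.Nonempty ∧ Y ⊆ f.Dom ∧ IsOrdOn f Y ∧ IsOrdOn f (f.Dom \ Y) ∧
    ∀ ⦃a b u v : X⦄, a ∈ Y → b ∈ f.Dom \ Y → u ∈ f a → v ∈ f b → a ≤ b ∧ v ≤ u

/-- `f` is an orientation-preserving partial transformation: it is the empty transformation
or it admits an ideal. -/
def IsOP [LinearOrder X] (f : X →. X) : Prop :=
  f.Dom = ∅ ∨ ∃ Y : Set X, IsIdeal f Y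

open Classical in
/-- A choice of section for `α`, preferring preimages in `Y`. -/
noncomputable def secOf (α : X →. X) (Y : Set X) : X →. X :=
  fun v => ⟨∃ x, v ∈ α x, fun h =>
    if h1 : ∃ x ∈ Y, v ∈ α x then h1.choose else h.choose⟩

lemma secOf_spec {α : X →. X} {Y : Set X} {v u : X} (hm : u ∈ secOf α Y v) :
    v ∈ α u := by
  rcases Part.mem_mk_iff.mp hm with ⟨h, rfl⟩
  split_ifs with h1
  · exact h1.choose_spec.2
  · exact h.choose_spec

lemma secOf_memY {α : X →. X} {Y : Set X} {v u : X} (hm : u ∈ secOf α Y v)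
    (hex : ∃ x ∈ Y, v ∈ α x) : u ∈ Y := by
  rcases Part.mem_mk_iff.mp hm with ⟨h, rfl⟩
  rw [dif_pos hex]
  exact hex.choose_spec.1

lemma secOf_dom {α : X →. X} {Y : Set X} {v : X} :
    v ∈ (secOf α Y).Dom ↔ ∃ x, v ∈ α x := Iff.rfl

/-- For every orientation-preserving partial transformation `α` there is an injective
orientation-preserving partial transformation `β` with `αβα = α` (left factor applied first);
in particular, the monoid `POP(X)` is regular. -/
theorem stmt7 (X : Type*) [LinearOrder X] (α : X →. X) (hOP : IsOP α) :
    ∃ β : X →. X, IsOP β ∧ (∀ ⦃x y u : X⦄, u ∈ β x → u ∈ β y → x = y) ∧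
      α.comp (β.comp α) = α := by
  classical
  obtain ⟨Y, hYcase⟩ : ∃ Y : Set X, α.Dom = ∅ ∨ IsIdeal α Y := by
    rcases hOP with h | ⟨Y, hY⟩
    · exact ⟨∅, Or.inl h⟩
    · exact ⟨Y, Or.inr hY⟩
  refine ⟨secOf α Y, ?_, ?_, ?_⟩
  · -- IsOP
    rcases hYcase with hE | hY
    · left
      ext v
      simp only [Set.mem_empty_iff_false, iff_false]
      intro hv
      rcases secOf_dom.mp hv with ⟨x, hx⟩
      have : x ∈ α.Dom := Part.dom_iff_mem.mpr ⟨v, hx⟩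
      rw [hE] at this
      exact this
    · right
      obtain ⟨hYne, hYsub, hOY, hOC, hID⟩ := hY
      -- order-preserving on the part whose chosen preimage lies in Y
      have ordY : IsOrdOn (secOf α Y) {v | ∃ x ∈ Y, v ∈ α x} := by
        intro v w p q hv hw hvw hp hq
        have hpY : p ∈ Y := secOf_memY hp hv
        have hqY : q ∈ Y := secOf_memY hq hw
        by_contra hle
        have hlt : q < p := not_le.mp hle
        have : w ≤ v := hOY hqY hpY hlt.le (secOf_spec hq) (secOf_spec hp)
        have hvw' : v = w := le_antisymm hvw this
        subst hvw'
        exact hlt.ne (Part.mem_unique hq hp)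
      have ordC : IsOrdOn (secOf α Y) {v | (∃ x, v ∈ α x) ∧ ¬ ∃ x ∈ Y, v ∈ α x} := by
        intro v w p q hv hw hvw hp hq
        have hpC : p ∈ α.Dom \ Y := by
          refine ⟨Part.dom_iff_mem.mpr ⟨v, secOf_spec hp⟩, fun hpY => hv.2 ⟨p, hpY, secOf_spec hp⟩⟩
        have hqC : q ∈ α.Dom \ Y := by
          refine ⟨Part.dom_iff_mem.mpr ⟨w, secOf_spec hq⟩, fun hqY => hw.2 ⟨q, hqY, secOf_spec hq⟩⟩
        by_contra hle
        have hlt : q < p := not_le.mp hle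
        have : w ≤ v := hOC hqC hpC hlt.le (secOf_spec hq) (secOf_spec hp)
        have hvw' : v = w := le_antisymm hvw this
        subst hvw'
        exact hlt.ne (Part.mem_unique hq hp)
      by_cases hZ : ∃ v, (∃ x, v ∈ α x) ∧ ¬ ∃ x ∈ Y, v ∈ α x
      · -- the ideal is the set of values with no preimage in Y
        refine ⟨{v | (∃ x, v ∈ α x) ∧ ¬ ∃ x ∈ Y, v ∈ α x}, hZ, ?_, ordC, ?_, ?_⟩
        · intro v hv
          exact secOf_dom.mpr hv.1
        · -- on Dom \ Z, all values have a preimage in Y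
          intro v w p q hv hw hvw hp hq
          have hv' : ∃ x ∈ Y, v ∈ α x := by
            by_contra h
            exact hv.2 ⟨secOf_dom.mp hv.1, h⟩
          have hw' : ∃ x ∈ Y, w ∈ α x := by
            by_contra h
            exact hw.2 ⟨secOf_dom.mp hw.1, h⟩
          exact ordY hv' hw' hvw hp hq
        · intro a b u v ha hb hu hv
          have hb' : ∃ x ∈ Y, b ∈ α x := by
            by_contra h
            exact hb.2 ⟨secOf_dom.mp hb.1, h⟩
          have hvY : v ∈ Y := secOf_memY hv hb'
          have huC : u ∈ α.Dom \ Y := by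
            refine ⟨Part.dom_iff_mem.mpr ⟨a, secOf_spec hu⟩,
              fun huY => ha.2 ⟨u, huY, secOf_spec hu⟩⟩
          have := hID hvY huC (secOf_spec hv) (secOf_spec hu)
          exact ⟨this.2, this.1⟩
      · -- all values have a preimage in Y; the ideal is the whole domain
        push_neg at hZ
        refine ⟨(secOf α Y).Dom, ?_, le_refl _, ?_, ?_, ?_⟩
        · obtain ⟨y0, hy0⟩ := hYne
          have hy0d : (α y0).Dom := hYsub hy0
          exact ⟨(α y0).get hy0d, secOf_dom.mpr ⟨y0, Part.get_mem hy0d⟩⟩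
        · intro v w p q hv hw hvw hp hq
          exact ordY (hZ v (secOf_dom.mp hv)) (hZ w (secOf_dom.mp hw)) hvw hp hq
        · intro v w p q hv hw hvw hp hq
          exact absurd hv.1 hv.2
        · intro a b u v ha hb hu hv
          exact absurd hb.1 hb.2
  · -- injective
    intro x y u hx hy
    exact Part.mem_unique (secOf_spec hx) (secOf_spec hy)
  · -- α β α = α
    apply PFun.ext
    intro x u
    constructor
    · intro h
      rw [PFun.comp_apply] at h
      replace h := Part.mem_bind_iff.mp h
      obtain ⟨b, hb, hu⟩ := h
      rw [PFun.comp_apply] at hb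
      replace hb := Part.mem_bind_iff.mp hb
      obtain ⟨w, hw, hbw⟩ := hb
      have hwb : w ∈ α b := secOf_spec hbw
      rwa [Part.mem_unique hu hwb]
    · intro hu
      have hdom : (secOf α Y u).Dom := ⟨x, hu⟩
      set b := (secOf α Y u).get hdom with hbdef
      have hb : b ∈ secOf α Y u := Part.get_mem hdom
      have hub : u ∈ α b := secOf_spec hb
      rw [PFun.comp_apply]
      apply Part.mem_bind_iff.mpr
      refine ⟨b, ?_, hub⟩
      rw [PFun.comp_apply]
      apply Part.mem_bind_iff.mpr
      exact ⟨u, hu, hb⟩
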